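/- Let U ⊆ ℝ² be a bounded connected open set, and suppose every point z ∈ U has a radius r > 0 with B(z, 2r) ⊆ U such that a given map f : U → ℝ² satisfies: f is 1-Lipschitz and λ(f(U)) = λ(U). Then for every z ∈ U and r with B(z,2r) ⊆ U, f restricted to B(z,r) preserves distances. -/

import Mathlib

open MeasureTheory Metric Set

private lemma euclid_vol_image_le (f : EuclideanSpace ℝ (Fin 2) → EuclideanSpace ℝ (Fin 2))
    (A : Set (EuclideanSpace ℝ (Fin 2))) (h : LipschitzOnWith 1 f A) :
    volume (f '' A) ≤ volume A := by
  have hfr : ((Module.finrank ℝ (EuclideanSpace ℝ (Fin 2)) : ℕ) : ℝ) = (2 : ℝ) := by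
    rw [finrank_euclideanSpace_fin]; norm_num
  haveI hHaar : (μH[(2:ℝ)] : Measure (EuclideanSpace ℝ (Fin 2))).IsAddHaarMeasure := by
    rw [← hfr]; infer_instance
  have hμ : (volume : Measure (EuclideanSpace ℝ (Fin 2)))
      = (volume : Measure (EuclideanSpace ℝ (Fin 2))).addHaarScalarFactor μH[(2:ℝ)]
        • (μH[(2:ℝ)] : Measure (EuclideanSpace ℝ (Fin 2))) :=
    Measure.isAddLeftInvariant_eq_smul _ _
  have hH : μH[(2:ℝ)] (f '' A) ≤ μH[(2:ℝ)] A := by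
    have := h.hausdorffMeasure_image_le (by norm_num : (0:ℝ) ≤ 2)
    simpa using this
  have happ : ∀ s : Set (EuclideanSpace ℝ (Fin 2)),
      volume s = (volume : Measure (EuclideanSpace ℝ (Fin 2))).addHaarScalarFactor μH[(2:ℝ)]
        * μH[(2:ℝ)] s := by
    intro s
    conv_lhs => rw [hμ]
    simp [Measure.smul_apply]
  rw [happ (f '' A), happ A]
  exact mul_le_mul_right hH _

theorem stmt16 (U : Set (EuclideanSpace ℝ (Fin 2))) (hUb : Bornology.IsBounded U)
    (hUc : IsConnected U) (hUo : IsOpen U)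
    (f : EuclideanSpace ℝ (Fin 2) → EuclideanSpace ℝ (Fin 2))
    (hf : ∀ x ∈ U, ∀ y ∈ U, dist (f x) (f y) ≤ dist x y)
    (hmeas : volume (f '' U) = volume U) :
    ∀ z ∈ U, ∀ r : ℝ, closedBall z (2 * r) ⊆ U →
      ∀ x ∈ closedBall z r, ∀ y ∈ closedBall z r, dist (f x) (f y) = dist x y := by
  intro z hz r h2r x hx y hy
  simp only [mem_closedBall] at hx hy
  have hr0 : 0 ≤ r := le_trans dist_nonneg hx
  have hsub : closedBall z r ⊆ U := fun q hq =>
    h2r (by simp only [mem_closedBall] at hq ⊢; linarith)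
  have hxU : x ∈ U := hsub (by simpa using hx)
  have hyU : y ∈ U := hsub (by simpa using hy)
  by_contra hne
  have hlt : dist (f x) (f y) < dist x y := lt_of_le_of_ne (hf x hxU y hyU) hne
  set d := dist x y with hd
  have hd0 : 0 < d := lt_of_le_of_lt dist_nonneg hlt
  set m := d / 2 with hm
  have hm0 : 0 < m := by positivity
  have hdxy : dist x y ≤ 2 * r := by
    calc dist x y ≤ dist x z + dist z y := dist_triangle x z y
    _ ≤ r + r := add_le_add hx (by rwa [dist_comm])
    _ = 2 * r := by ring
  have hmr : m ≤ r := by rw [hm]; linarith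
  -- the stadium C
  set C := closedBall x m ∪ closedBall y m with hC
  have hCU : C ⊆ U := by
    rintro q (hq | hq) <;> simp only [mem_closedBall] at hq <;> apply h2r <;>
      simp only [mem_closedBall]
    · calc dist q z ≤ dist q x + dist x z := dist_triangle q x z
        _ ≤ m + r := add_le_add hq hx
        _ ≤ 2 * r := by linarith
    · calc dist q z ≤ dist q y + dist y z := dist_triangle q y z
        _ ≤ m + r := add_le_add hq hy
        _ ≤ 2 * r := by linarith
  have hCmeas : MeasurableSet C :=
    (measurableSet_closedBall).union measurableSet_closedBall
  -- volume of balls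
  have hcenter : ∀ c : EuclideanSpace ℝ (Fin 2), ∀ s : ℝ,
      volume (closedBall c s) = volume (closedBall (0 : EuclideanSpace ℝ (Fin 2)) s) :=
    fun c s => Measure.addHaar_closedBall_center volume c s
  have hballeq : volume (closedBall y m) = volume (closedBall x m) := by
    rw [hcenter y, hcenter x]
  have hballlt : volume (closedBall x m) < ⊤ := measure_closedBall_lt_top
  -- the two balls of C intersect in the sphere, which is null
  have hinterC : volume (closedBall x m ∩ closedBall y m) = 0 := by
    refine measure_mono_null ?_ (Measure.addHaar_sphere volume x m)
    intro q ⟨hq1, hq2⟩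
    simp only [mem_closedBall] at hq1 hq2
    have htri : dist x y ≤ dist q x + dist q y := by
      rw [dist_comm q x]; exact dist_triangle x q y
    have hq1' : m ≤ dist q x := by
      have hdd : d = dist x y := hd
      have hmm : m = d / 2 := hm
      linarith
    exact mem_sphere.mpr (le_antisymm hq1 hq1')
  have hvolC : volume C = volume (closedBall x m) + volume (closedBall y m) := by
    rw [hC, ← measure_union_add_inter _ measurableSet_closedBall, hinterC, add_zero]
  -- image of C is contained in union of two closer balls
  set D := closedBall (f x) m ∪ closedBall (f y) m with hD
  have hfC : f '' C ⊆ D := by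
    rintro _ ⟨q, hq | hq, rfl⟩
    · left
      simp only [mem_closedBall] at hq ⊢
      exact le_trans (hf q (hCU (Or.inl hq)) x hxU) hq
    · right
      simp only [mem_closedBall] at hq ⊢
      exact le_trans (hf q (hCU (Or.inr hq)) y hyU) hq
  -- D has strictly smaller volume than C
  have hDlt : volume D < volume C := by
    set p := midpoint ℝ (f x) (f y) with hp
    set ε := m - dist (f x) (f y) / 2 with hε
    have hε0 : 0 < ε := by rw [hε, hm]; linarith
    have hpx : dist p (f x) = dist (f x) (f y) / 2 := by
      rw [hp, dist_midpoint_left]; simp; ring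
    have hpy : dist p (f y) = dist (f x) (f y) / 2 := by
      rw [hp, dist_midpoint_right]; simp; ring
    have hsubp : closedBall p ε ⊆ closedBall (f x) m ∩ closedBall (f y) m := by
      intro q hq
      simp only [mem_closedBall] at hq
      constructor <;> simp only [mem_closedBall]
      · calc dist q (f x) ≤ dist q p + dist p (f x) := dist_triangle _ _ _
          _ ≤ ε + dist (f x) (f y) / 2 := by rw [hpx]; exact add_le_add_left hq _
          _ = m := by rw [hε]; ring
      · calc dist q (f y) ≤ dist q p + dist p (f y) := dist_triangle _ _ _
          _ ≤ ε + dist (f x) (f y) / 2 := by rw [hpy]; exact add_le_add_left hq _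
          _ = m := by rw [hε]; ring
    have hinterpos : 0 < volume (closedBall (f x) m ∩ closedBall (f y) m) :=
      lt_of_lt_of_le (measure_closedBall_pos volume p hε0) (measure_mono hsubp)
    have key : volume D + volume (closedBall (f x) m ∩ closedBall (f y) m)
        = volume (closedBall (f x) m) + volume (closedBall (f y) m) :=
      measure_union_add_inter _ measurableSet_closedBall
    have hfballeq : volume (closedBall (f x) m) = volume (closedBall x m) := by
      rw [hcenter (f x), hcenter x]
    have hfballeq' : volume (closedBall (f y) m) = volume (closedBall x m) := by
      rw [hcenter (f y), hcenter x]
    have hDtop : volume D ≠ ⊤ := by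
      refine (lt_of_le_of_lt (measure_union_le _ _) ?_).ne
      rw [hfballeq, hfballeq']
      exact ENNReal.add_lt_top.mpr ⟨hballlt, hballlt⟩
    have hDle : volume D < volume (closedBall (f x) m) + volume (closedBall (f y) m) := by
      rw [← key]
      exact ENNReal.lt_add_right hDtop hinterpos.ne'
    calc volume D < volume (closedBall (f x) m) + volume (closedBall (f y) m) := hDle
      _ = volume C := by rw [hvolC, hfballeq, hfballeq', hballeq]
  -- f is 1-Lipschitz on U
  have hfL : LipschitzOnWith 1 f U := by
    intro a ha b hb
    rw [edist_dist, edist_dist, ENNReal.coe_one, one_mul]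
    exact ENNReal.ofReal_le_ofReal (hf a ha b hb)
  -- final contradiction
  have hUfin : volume U < ⊤ := hUb.measure_lt_top
  have hsplit : volume (U \ C) + volume C = volume U := by
    have := measure_diff_add_inter (μ := volume) U hCmeas
    rwa [inter_eq_self_of_subset_right hCU] at this
  have hchain : volume U < volume U := by
    calc volume U = volume (f '' U) := hmeas.symm
      _ ≤ volume (f '' (U \ C) ∪ f '' C) := by
          apply measure_mono
          rw [← image_union]
          exact image_mono (by rw [diff_union_self]; exact subset_union_left)
      _ ≤ volume (f '' (U \ C)) + volume (f '' C) := measure_union_le _ _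
      _ ≤ volume (U \ C) + volume D := by
          exact add_le_add (euclid_vol_image_le f _ (hfL.mono diff_subset))
            (measure_mono hfC)
      _ < volume (U \ C) + volume C := by
          refine ENNReal.add_lt_add_left ?_ hDlt
          exact ne_top_of_le_ne_top hUfin.ne (measure_mono diff_subset)
      _ = volume U := hsplit
  exact absurd hchain (lt_irrefl _)
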